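/- Let (a_t)_{t≥0} be a nonnegative sequence satisfying a_t ≤ (1 + c/t) a_{t-1} + b/t for all t ≥ 1, with a_{t₀} = 0 for some t₀ ≥ 1, where c, b > 0. Then for all T ≥ t₀, a_T ≤ (b/c) (T/t₀)^c. -/

import Mathlib

/-- Discrete Gronwall-type recursion: a nonnegative sequence with
`a_t ≤ (1 + c/t) a_{t-1} + b/t` and `a_{t₀} = 0` satisfies
`a_T ≤ (b/c)(T/t₀)^c` for all `T ≥ t₀`. -/
theorem gronwall_recursion (a : ℕ → ℝ) (b c : ℝ) (hb : 0 < b) (hc : 0 < c)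
    (ha : ∀ t, 0 ≤ a t)
    (hrec : ∀ t : ℕ, 1 ≤ t → a t ≤ (1 + c / t) * a (t - 1) + b / t)
    (t₀ : ℕ) (ht₀ : 1 ≤ t₀) (hzero : a t₀ = 0) :
    ∀ T : ℕ, t₀ ≤ T → a T ≤ (b / c) * ((T : ℝ) / (t₀ : ℝ)) ^ c := by
  have ht0R : (0:ℝ) < (t₀ : ℝ) := by exact_mod_cast ht₀
  have key : ∀ T : ℕ, t₀ ≤ T → a T ≤ (b / c) * (((T : ℝ) / (t₀ : ℝ)) ^ c - 1) := by
    intro T hT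
    induction T, hT using Nat.le_induction with
    | base =>
      rw [hzero, div_self ht0R.ne', Real.one_rpow]
      simp
    | succ T hT ih =>
      have hT1 : (1:ℝ) ≤ (T:ℝ) := by exact_mod_cast le_trans ht₀ hT
      have hTpos : (0:ℝ) < (T:ℝ) := by linarith
      have hT1pos : (0:ℝ) < (T:ℝ) + 1 := by linarith
      have hrecT := hrec (T+1) (by omega)
      have hcast : ((T+1 : ℕ) : ℝ) = (T:ℝ) + 1 := by push_cast; ring
      rw [Nat.add_sub_cancel, hcast] at hrecT
      rw [hcast]
      set X := ((T:ℝ) / (t₀:ℝ)) ^ c with hX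
      have hXnn : 0 ≤ X := Real.rpow_nonneg (by positivity) c
      -- main inequality : (1 + c/(T+1)) * X ≤ ((T+1)/t₀)^c
      set x := ((T:ℝ) + 1) / (T:ℝ) with hxdef
      have hxpos : 0 < x := by positivity
      have hlog : 1 / ((T:ℝ)+1) ≤ Real.log x := by
        have h := Real.one_sub_inv_le_log_of_pos hxpos
        have hxinv : x⁻¹ = (T:ℝ) / ((T:ℝ)+1) := by
          rw [hxdef]; field_simp
        rw [hxinv] at h
        have heq : 1 - (T:ℝ) / ((T:ℝ)+1) = 1 / ((T:ℝ)+1) := by field_simp; ring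
        linarith [heq ▸ h]
      have hexp : 1 + c / ((T:ℝ)+1) ≤ x ^ c := by
        have h1 : 1 + c / ((T:ℝ)+1) ≤ 1 + c * Real.log x := by
          have : c / ((T:ℝ)+1) ≤ c * Real.log x := by
            calc c / ((T:ℝ)+1) = c * (1 / ((T:ℝ)+1)) := by ring
            _ ≤ c * Real.log x := by
              exact mul_le_mul_of_nonneg_left hlog hc.le
          linarith
        have h2 : 1 + c * Real.log x ≤ Real.exp (c * Real.log x) := by
          have := Real.add_one_le_exp (c * Real.log x)
          linarith
        have h3 : x ^ c = Real.exp (Real.log x * c) := Real.rpow_def_of_pos hxpos c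
        rw [h3, mul_comm (Real.log x) c]
        linarith
      have hmul : ((T:ℝ)+1) / (t₀:ℝ) = x * ((T:ℝ) / (t₀:ℝ)) := by
        rw [hxdef]; field_simp
      have hmain : (1 + c / ((T:ℝ)+1)) * X ≤ (((T:ℝ)+1) / (t₀:ℝ)) ^ c := by
        rw [hmul, Real.mul_rpow hxpos.le (by positivity)]
        exact mul_le_mul_of_nonneg_right hexp hXnn
      have hcoef : (0:ℝ) ≤ 1 + c / ((T:ℝ)+1) := by positivity
      have step1 : a (T+1) ≤ (1 + c/((T:ℝ)+1)) * ((b/c) * (X - 1)) + b/((T:ℝ)+1) :=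
        le_trans hrecT (by
          have := mul_le_mul_of_nonneg_left ih hcoef
          linarith)
      have heq : (1 + c/((T:ℝ)+1)) * ((b/c) * (X - 1)) + b/((T:ℝ)+1)
          = (b/c) * ((1 + c/((T:ℝ)+1)) * X) - b/c := by
        field_simp
        ring
      rw [heq] at step1
      have : (b/c) * ((1 + c/((T:ℝ)+1)) * X) ≤ (b/c) * ((((T:ℝ)+1) / (t₀:ℝ)) ^ c) :=
        mul_le_mul_of_nonneg_left hmain (by positivity)
      linarith
  intro T hT
  have h := key T hT
  have hXnn : 0 ≤ ((T : ℝ) / (t₀ : ℝ)) ^ c := Real.rpow_nonneg (by positivity) c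
  nlinarith [div_pos hb hc]
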